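/- If a word w has no run at all in an NBW A (the reduced split tree of A on w is eventually the empty slice ⊥), then in the improved slice-based construction the run s₀s₁⋯s_{i-1}⊥^ω, following the undecorated evolution δ_u until reaching ⊥, is an accepting run of the complement automaton A' on w; hence w ∈ L(A'). -/

import Mathlib

/-- A nondeterministic Büchi automaton. -/
structure NBW (A Q : Type*) where
  init : Q
  trans : Q → A → Set Q
  acc : Set Q

def NBW.IsRun {A Q : Type*} (M : NBW A Q) (w : ℕ → A) (ρ : ℕ → Q) : Prop :=
  ρ 0 = M.init ∧ ∀ i, ρ (i + 1) ∈ M.trans (ρ i) (w i)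

def NBW.Accepting {A Q : Type*} (M : NBW A Q) (ρ : ℕ → Q) : Prop :=
  ∃ q ∈ M.acc, ∀ N, ∃ i ≥ N, ρ i = q

def NBW.Lang {A Q : Type*} (M : NBW A Q) : Set (ℕ → A) :=
  {w | ∃ ρ, M.IsRun w ρ ∧ M.Accepting ρ}


/-- Decorations of slice nodes. -/
inductive Dec | zero | star | one
deriving DecidableEq

/-- A decorated slice: a sequence of sets of states with decorations. -/
abbrev DSlice (Q : Type*) := List (Set Q × Dec)

/-- Two adjacent decorations are mergible iff equal and in `{0, *}`. -/
def mergibleB (d e : Dec) : Bool :=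
  decide (d = e) && (decide (d = Dec.zero) || decide (d = Dec.star))

/-- `merge`: recursively merge all adjacent mergible nodes. -/
def dmerge {Q : Type*} : DSlice Q → DSlice Q
  | [] => []
  | [x] => [x]
  | x :: y :: rest =>
    if mergibleB x.2 y.2 then dmerge ((x.1 ∪ y.1, x.2) :: rest)
    else x :: dmerge (y :: rest)
termination_by s => s.length

/-- Merge as many as possible but at most `j` merging operations at the front
(so at most `j + 1` consecutive nodes get merged into one). -/
def mergeFront {Q : Type*} : ℕ → DSlice Q → DSlice Q
  | 0, s => s
  | _ + 1, [] => []
  | _ + 1, [x] => [x]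
  | j + 1, x :: y :: rest =>
    if mergibleB x.2 y.2 then mergeFront j ((x.1 ∪ y.1, x.2) :: rest) else x :: y :: rest

/-- The positions of the mergible pairs of adjacent nodes, left to right. -/
def mergiblePos {Q : Type*} (s : DSlice Q) : List ℕ :=
  (List.range s.length).filter fun k =>
    match s[k]?, s[k + 1]? with
    | some x, some y => mergibleB x.2 y.2
    | _, _ => false

/-- `merge_{i,j}`: merge as many as possible and at most `j` consecutive
mergible nodes, starting from the `i`-th (1-indexed) mergible pair. -/
def mergeIJ {Q : Type*} (i j : ℕ) (s : DSlice Q) : DSlice Q :=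
  match (mergiblePos s)[i - 1]? with
  | none => s
  | some k => s.take k ++ mergeFront (j - 1) (s.drop k)

/-- A (decorated) slice is a reset slice iff no node is decorated `0`. -/
def isResetB {Q : Type*} (s : DSlice Q) : Bool := s.all fun x => !(decide (x.2 = Dec.zero))

/-- A slice is doomed iff no node is decorated `1`. -/
def Doomed {Q : Type*} (s : DSlice Q) : Prop := ∀ x ∈ s, x.2 ≠ Dec.one

/-- Decorations of the (left, right) children of a `d`-decorated node,
depending on whether the current slice is a reset slice. -/
def decPair (reset : Bool) (d : Dec) : Dec × Dec :=
  if reset then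
    match d with
    | Dec.one => (Dec.zero, Dec.one)
    | _ => (Dec.zero, Dec.zero)
  else
    match d with
    | Dec.one => (Dec.star, Dec.one)
    | d => (d, d)

/-- One step of decorated-slice evolution, before deletion of empty nodes. -/
def ddAux {A Q : Type*} (δ : Q → A → Set Q) (F : Set Q) (a : A) (reset : Bool) :
    DSlice Q → Set Q → DSlice Q
  | [], _ => []
  | (Qi, d) :: rest, seen =>
    ((((⋃ q ∈ Qi, δ q a) ∩ F) \ seen), (decPair reset d).1) ::
    ((((⋃ q ∈ Qi, δ q a) \ F) \ seen), (decPair reset d).2) ::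
      ddAux δ F a reset rest
        (seen ∪ ((((⋃ q ∈ Qi, δ q a) ∩ F) \ seen)) ∪ (((⋃ q ∈ Qi, δ q a) \ F) \ seen))

/-- The deterministic decorated-successor function `δ_d'` of the improved
slice-based construction: split nodes, decorate children, delete empty nodes. -/
noncomputable def ddSucc {A Q : Type*} (δ : Q → A → Set Q) (F : Set Q)
    (s : DSlice Q) (a : A) : DSlice Q :=
  (ddAux δ F a (isResetB s) s ∅).filter fun x => @decide x.1.Nonempty (Classical.propDecidable _)

/-- One step of undecorated-slice evolution, before deletion of empty nodes. -/
def duAux {A Q : Type*} (δ : Q → A → Set Q) (F : Set Q) (a : A) :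
    List (Set Q) → Set Q → List (Set Q)
  | [], _ => []
  | Qi :: rest, seen =>
    ((((⋃ q ∈ Qi, δ q a) ∩ F) \ seen)) :: (((⋃ q ∈ Qi, δ q a) \ F) \ seen) ::
      duAux δ F a rest
        (seen ∪ ((((⋃ q ∈ Qi, δ q a) ∩ F) \ seen)) ∪ (((⋃ q ∈ Qi, δ q a) \ F) \ seen))

/-- The undecorated-slice evolution `δ_u`: split nodes and delete empty nodes. -/
noncomputable def duSucc {A Q : Type*} (δ : Q → A → Set Q) (F : Set Q)
    (s : List (Set Q)) (a : A) : List (Set Q) :=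
  (duAux δ F a s ∅).filter fun S => @decide S.Nonempty (Classical.propDecidable _)

/-- One step of the guessing transition, before deletion of empty nodes:
left (accepting) children are decorated `0`, right children `1`. -/
def dgAux {A Q : Type*} (δ : Q → A → Set Q) (F : Set Q) (a : A) :
    List (Set Q) → Set Q → DSlice Q
  | [], _ => []
  | Qi :: rest, seen =>
    ((((⋃ q ∈ Qi, δ q a) ∩ F) \ seen), Dec.zero) ::
    ((((⋃ q ∈ Qi, δ q a) \ F) \ seen), Dec.one) ::
      dgAux δ F a rest
        (seen ∪ ((((⋃ q ∈ Qi, δ q a) ∩ F) \ seen)) ∪ (((⋃ q ∈ Qi, δ q a) \ F) \ seen))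

/-- The deterministic guessing function `δ_g'` of the improved construction. -/
noncomputable def dgSucc {A Q : Type*} (δ : Q → A → Set Q) (F : Set Q)
    (s : List (Set Q)) (a : A) : DSlice Q :=
  (dgAux δ F a s ∅).filter fun x => @decide x.1.Nonempty (Classical.propDecidable _)

/-- The improved slice-based complement of an NBW. States are undecorated
slices (`Sum.inl`) and decorated slices (`Sum.inr`); the empty slice `⊥` is
represented as the decorated `Sum.inr []`. Accepting states are the decorated
reset slices. -/
noncomputable def sliceComplement {A Q : Type*} (M : NBW A Q) :
    NBW A (List (Set Q) ⊕ DSlice Q) where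
  init := Sum.inl [{M.init}]
  trans := fun s a =>
    match s with
    | Sum.inl u =>
      {t | t = (match duSucc M.trans M.acc u a with
                | [] => Sum.inr ([] : DSlice Q)
                | l => Sum.inl l)} ∪
      {t | ¬ Doomed (dgSucc M.trans M.acc u a) ∧
           t = Sum.inr (dmerge (dgSucc M.trans M.acc u a))}
    | Sum.inr d =>
      match d with
      | [] => {Sum.inr ([] : DSlice Q)}
      | d => {t | ¬ Doomed (ddSucc M.trans M.acc d a) ∧
                  t = Sum.inr (dmerge (ddSucc M.trans M.acc d a))}
  acc := {s | ∃ d : DSlice Q, s = Sum.inr d ∧ ∀ x ∈ d, x.2 ≠ Dec.zero}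

/-- The levels (slices) of the reduced split tree of `M` on `w`. -/
noncomputable def uSlices {A Q : Type*} (M : NBW A Q) (w : ℕ → A) : ℕ → List (Set Q)
  | 0 => [{M.init}]
  | n + 1 => duSucc M.trans M.acc (uSlices M w n) (w n)

section AuxKonig

variable {A Q : Type*}

/-- States reachable from `q` in `k` steps starting at time `n`. -/
def Rfrom (M : NBW A Q) (w : ℕ → A) (q : Q) (n : ℕ) : ℕ → Set Q
  | 0 => {q}
  | k + 1 => ⋃ p ∈ Rfrom M w q n k, M.trans p (w (n + k))

def Good (M : NBW A Q) (w : ℕ → A) (q : Q) (n : ℕ) : Prop :=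
  ∀ k, (Rfrom M w q n k).Nonempty

lemma Rfrom_succ (M : NBW A Q) (w : ℕ → A) (q : Q) (n k : ℕ) :
    Rfrom M w q n (k + 1) = ⋃ p ∈ M.trans q (w n), Rfrom M w p (n + 1) k := by
  induction k generalizing q n with
  | zero => simp [Rfrom]
  | succ k ih =>
    have h1 : Rfrom M w q n (k + 1 + 1)
        = ⋃ p ∈ Rfrom M w q n (k + 1), M.trans p (w (n + (k + 1))) := rfl
    rw [h1, ih]
    have h2 : ∀ p : Q, Rfrom M w p (n + 1) (k + 1)
        = ⋃ r ∈ Rfrom M w p (n + 1) k, M.trans r (w (n + (k + 1))) := by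
      intro p
      have : n + 1 + k = n + (k + 1) := by omega
      rw [Rfrom, this]
    ext x
    simp only [Set.mem_iUnion, exists_prop, h2]
    tauto

lemma Rfrom_empty_mono (M : NBW A Q) (w : ℕ → A) (q : Q) (n : ℕ) {k m : ℕ}
    (hkm : k ≤ m) (h : Rfrom M w q n k = ∅) : Rfrom M w q n m = ∅ := by
  induction m with
  | zero => exact Nat.le_zero.mp hkm ▸ h
  | succ m ih =>
    rcases Nat.lt_or_ge k (m + 1) with hlt | hge
    · have := ih (by omega)
      rw [Rfrom, this]
      simp
    · have : k = m + 1 := by omega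
      exact this ▸ h

lemma good_step (M : NBW A Q) [Fintype Q] (w : ℕ → A) {q : Q} {n : ℕ}
    (h : Good M w q n) : ∃ p, p ∈ M.trans q (w n) ∧ Good M w p (n + 1) := by
  classical
  by_contra hc
  push_neg at hc
  have hex : ∀ p : Q, ∃ k, p ∈ M.trans q (w n) → Rfrom M w p (n + 1) k = ∅ := by
    intro p
    by_cases hp : p ∈ M.trans q (w n)
    · obtain ⟨k, hk⟩ := not_forall.mp (hc p hp)
      exact ⟨k, fun _ => Set.not_nonempty_iff_eq_empty.mp hk⟩
    · exact ⟨0, fun h' => absurd h' hp⟩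
  choose f hf using hex
  set K := Finset.univ.sup f with hK
  have hKall : ∀ p ∈ M.trans q (w n), Rfrom M w p (n + 1) K = ∅ := by
    intro p hp
    exact Rfrom_empty_mono M w p (n + 1) (Finset.le_sup (Finset.mem_univ p)) (hf p hp)
  obtain ⟨x, hx⟩ := h (K + 1)
  rw [Rfrom_succ] at hx
  simp only [Set.mem_iUnion, exists_prop] at hx
  obtain ⟨p, hp, hxp⟩ := hx
  rw [hKall p hp] at hxp
  exact hxp

lemma exists_run_of_good (M : NBW A Q) [Fintype Q] (w : ℕ → A)
    (h : Good M w M.init 0) : ∃ ρ : ℕ → Q, M.IsRun w ρ := by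
  let g : ∀ n, {q : Q // Good M w q n} := fun n =>
    Nat.rec ⟨M.init, h⟩
      (fun n p => ⟨(good_step M w p.2).choose,
        (good_step M w p.2).choose_spec.2⟩) n
  exact ⟨fun n => (g n).1, rfl, fun n => (good_step M w (g n).2).choose_spec.1⟩

/-- Union of a list of sets. -/
def SU : List (Set Q) → Set Q
  | [] => ∅
  | S :: l => S ∪ SU l

lemma SU_duAux (δ : Q → A → Set Q) (F : Set Q) (a : A) :
    ∀ (l : List (Set Q)) (seen : Set Q),
      SU (duAux δ F a l seen) = (⋃ q ∈ SU l, δ q a) \ seen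
  | [], seen => by simp [duAux, SU]
  | Qi :: rest, seen => by
    rw [duAux, SU, SU, SU_duAux δ F a rest,
      show SU (Qi :: rest) = Qi ∪ SU rest from rfl, Set.biUnion_union]
    set D := ⋃ q ∈ Qi, δ q a with hD
    set U := ⋃ q ∈ SU rest, δ q a with hU
    ext x
    simp only [Set.mem_union, Set.mem_diff, Set.mem_inter_iff]
    tauto

lemma SU_filter (l : List (Set Q)) :
    SU (l.filter fun S => @decide S.Nonempty (Classical.propDecidable _)) = SU l := by
  classical
  induction l with
  | nil => rfl
  | cons S l ih =>
    rw [List.filter_cons]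
    by_cases h : S.Nonempty
    · have : (@decide S.Nonempty (Classical.propDecidable _)) = true := by
        exact decide_eq_true h
      rw [if_pos this, SU, ih, SU]
    · have : (@decide S.Nonempty (Classical.propDecidable _)) ≠ true := by
        simpa using h
      rw [if_neg this, ih]
      have : S = ∅ := Set.not_nonempty_iff_eq_empty.mp h
      rw [SU, this, Set.empty_union]

lemma mem_filter_nonempty {l : List (Set Q)} {S : Set Q}
    (h : S ∈ l.filter fun S => @decide S.Nonempty (Classical.propDecidable _)) :
    S.Nonempty := by
  classical
  have := List.of_mem_filter h
  exact of_decide_eq_true this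

lemma SU_uSlices (M : NBW A Q) (w : ℕ → A) :
    ∀ n, SU (uSlices M w n) = Rfrom M w M.init 0 n
  | 0 => by simp [uSlices, SU, Rfrom]
  | n + 1 => by
    rw [uSlices, duSucc, SU_filter, SU_duAux, SU_uSlices M w n]
    have : Rfrom M w M.init 0 (n + 1)
        = ⋃ p ∈ Rfrom M w M.init 0 n, M.trans p (w (0 + n)) := rfl
    rw [this, Nat.zero_add, Set.diff_empty]

end AuxKonig

/-- If `w` has no run at all in `M`, then the reduced split tree eventually
becomes the empty slice `⊥`, and the run following the undecorated evolution
until `⊥` and then staying in `⊥` forever is an accepting run of the improved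
slice-based complement; hence `w ∈ L(A')`. -/
theorem stmt15 {A Q : Type*} [Fintype Q] (M : NBW A Q) (w : ℕ → A)
    (hnorun : ¬ ∃ ρ : ℕ → Q, M.IsRun w ρ) :
    (∃ i : ℕ, uSlices M w i = [] ∧
      (sliceComplement M).IsRun w
        (fun j => if j < i then Sum.inl (uSlices M w j) else Sum.inr ([] : DSlice Q)) ∧
      (sliceComplement M).Accepting
        (fun j => if j < i then Sum.inl (uSlices M w j) else Sum.inr ([] : DSlice Q))) ∧
    w ∈ (sliceComplement M).Lang := by
  classical
  have hng : ¬ Good M w M.init 0 := fun h => hnorun (exists_run_of_good M w h)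
  obtain ⟨k, hk⟩ : ∃ k, Rfrom M w M.init 0 k = ∅ := by
    by_contra h
    push_neg at h
    exact hng h
  have hku : SU (uSlices M w k) = ∅ := by rw [SU_uSlices]; exact hk
  have hke : ∃ n, uSlices M w n = [] := by
    refine ⟨k, ?_⟩
    cases hc : uSlices M w k with
    | nil => rfl
    | cons S t =>
      exfalso
      rw [hc, SU] at hku
      cases k with
      | zero => exact absurd hk (by simp [Rfrom])
      | succ m =>
        have hmem : S ∈ uSlices M w (m + 1) := hc ▸ List.mem_cons_self
        have : uSlices M w (m + 1)
            = duSucc M.trans M.acc (uSlices M w m) (w m) := rfl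
        rw [this, duSucc] at hmem
        obtain ⟨x, hx⟩ := mem_filter_nonempty hmem
        have : x ∈ (∅ : Set Q) := hku ▸ Or.inl hx
        exact this
  set i := Nat.find hke with hi
  have hinil : uSlices M w i = [] := Nat.find_spec hke
  have hmin : ∀ j < i, uSlices M w j ≠ [] := fun j hj => Nat.find_min hke hj
  have hi0 : 0 < i := by
    rcases Nat.eq_zero_or_pos i with h | h
    case inr => exact h
    · exfalso
      have : uSlices M w 0 = [] := h ▸ hinil
      simp [uSlices] at this
  set ρ : ℕ → (List (Set Q) ⊕ DSlice Q) :=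
    fun j => if j < i then Sum.inl (uSlices M w j) else Sum.inr ([] : DSlice Q)
    with hρ
  have hrun : (sliceComplement M).IsRun w ρ := by
    constructor
    · rw [hρ]
      simp only [if_pos hi0]
      rfl
    · intro j
      rcases lt_trichotomy (j + 1) i with hlt | heq | hgt
      · have hj : j < i := by omega
        rw [hρ]
        simp only [if_pos hlt, if_pos hj]
        show Sum.inl (uSlices M w (j + 1)) ∈
          (sliceComplement M).trans (Sum.inl (uSlices M w j)) (w j)
        have hdu : duSucc M.trans M.acc (uSlices M w j) (w j) = uSlices M w (j + 1) := rfl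
        left
        show Sum.inl (uSlices M w (j + 1))
          = (match duSucc M.trans M.acc (uSlices M w j) (w j) with
             | [] => Sum.inr ([] : DSlice Q)
             | l => Sum.inl l)
        rw [hdu]
        cases hc : uSlices M w (j + 1) with
        | nil => exact absurd hc (hmin _ hlt)
        | cons a l => rfl
      · have hj : j < i := by omega
        rw [hρ]
        have hni : ¬ (j + 1 < i) := by omega
        simp only [if_pos hj, if_neg hni]
        show Sum.inr ([] : DSlice Q) ∈
          (sliceComplement M).trans (Sum.inl (uSlices M w j)) (w j)
        have hdu : duSucc M.trans M.acc (uSlices M w j) (w j) = uSlices M w (j + 1) := rfl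
        left
        show Sum.inr ([] : DSlice Q)
          = (match duSucc M.trans M.acc (uSlices M w j) (w j) with
             | [] => Sum.inr ([] : DSlice Q)
             | l => Sum.inl l)
        have hnil' : uSlices M w (j + 1) = [] := by rw [heq]; exact hinil
        rw [hdu, hnil']
      · have hnj : ¬ (j < i) := by omega
        have hnj1 : ¬ (j + 1 < i) := by omega
        rw [hρ]
        simp only [if_neg hnj, if_neg hnj1]
        show Sum.inr ([] : DSlice Q) ∈
          (sliceComplement M).trans (Sum.inr ([] : DSlice Q)) (w j)
        show Sum.inr ([] : DSlice Q) ∈ ({Sum.inr ([] : DSlice Q)} :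
          Set (List (Set Q) ⊕ DSlice Q))
        rfl
  have hacc : (sliceComplement M).Accepting ρ := by
    refine ⟨Sum.inr ([] : DSlice Q), ⟨[], rfl, by simp⟩, fun N => ?_⟩
    refine ⟨max N i, le_max_left _ _, ?_⟩
    rw [hρ]
    have : ¬ (max N i < i) := by omega
    simp [this]
  exact ⟨⟨i, hinil, hrun, hacc⟩, ⟨ρ, hrun, hacc⟩⟩
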